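/- For every odd d and every n ≥ d, the symmetric tensor rank (Waring rank) of the elementary symmetric polynomial σ_{d,n} over ℂ is at most Σ_{i=0}^{(d-1)/2} C(n,i). -/

import Mathlib

open MvPolynomial Finset

namespace WaringAux

noncomputable def Phi (N : ℕ) (p : Polynomial ℂ) : Polynomial ℂ :=
  ∑ i ∈ range (N+1),
    Polynomial.C (p.coeff i) * (1 - Polynomial.X)^i * (1 + Polynomial.X)^(N-i)

local notation "ι" => algebraMap (Polynomial ℂ) (RatFunc ℂ)
local notation "x" => (algebraMap (Polynomial ℂ) (RatFunc ℂ)) Polynomial.X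

noncomputable def w : RatFunc ℂ := (1 - x) / (1 + x)

lemma one_add_x_ne : (1 + x : RatFunc ℂ) ≠ 0 := by
  have : ((1 : Polynomial ℂ) + Polynomial.X) ≠ 0 := by
    intro h
    have := congrArg (Polynomial.coeff · 0) h
    simp at this
  simpa using RatFunc.algebraMap_ne_zero this

lemma one_sub_w : 1 - w = 2 * x / (1 + x) := by
  rw [w, eq_div_iff one_add_x_ne, sub_mul, div_mul_cancel₀ _ one_add_x_ne]; ring

lemma one_add_w : 1 + w = 2 / (1 + x) := by
  rw [w, eq_div_iff one_add_x_ne, add_mul, div_mul_cancel₀ _ one_add_x_ne]; ring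


lemma natDegree_Phi_le (N : ℕ) (p : Polynomial ℂ) : (Phi N p).natDegree ≤ N := by
  apply Polynomial.natDegree_sum_le_of_forall_le
  intro i hi
  have hiN : i ≤ N := Nat.lt_succ_iff.mp (mem_range.mp hi)
  calc (Polynomial.C (p.coeff i) * (1 - Polynomial.X)^i * (1 + Polynomial.X)^(N-i)).natDegree
      ≤ (Polynomial.C (p.coeff i) * (1 - Polynomial.X)^i).natDegree + ((1 + Polynomial.X : Polynomial ℂ)^(N-i)).natDegree :=
        Polynomial.natDegree_mul_le
    _ ≤ ((Polynomial.C (p.coeff i)).natDegree + ((1 - Polynomial.X : Polynomial ℂ)^i).natDegree) + ((1 + Polynomial.X : Polynomial ℂ)^(N-i)).natDegree := by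
        exact Nat.add_le_add_right Polynomial.natDegree_mul_le _
    _ ≤ (0 + i * 1) + (N - i) * 1 := by
        gcongr
        · simp
        · exact (Polynomial.natDegree_pow_le).trans (by
            gcongr; exact (Polynomial.natDegree_sub_le _ _).trans (by simp))
        · exact (Polynomial.natDegree_pow_le).trans (by
            gcongr; exact (Polynomial.natDegree_add_le _ _).trans (by simp))
    _ ≤ N := by omega

lemma key (N : ℕ) (p : Polynomial ℂ) (hp : p.natDegree < N + 1) :
    ι (Phi N p) = (1 + x)^N * Polynomial.aeval w p := by
  conv_rhs => rw [Polynomial.as_sum_range' p (N+1) hp]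
  rw [Phi, map_sum, map_sum, mul_sum]
  apply sum_congr rfl
  intro i hi
  have hiN : i ≤ N := Nat.lt_succ_iff.mp (mem_range.mp hi)
  rw [map_mul, map_mul, map_pow, map_pow, Polynomial.aeval_monomial]
  have h1 : ι (1 - Polynomial.X) = 1 - x := by rw [map_sub, map_one]
  have h2 : ι (1 + Polynomial.X) = 1 + x := by rw [map_add, map_one]
  have h3 : ι (Polynomial.C (p.coeff i)) = algebraMap ℂ (RatFunc ℂ) (p.coeff i) := by
    simp [RatFunc.algebraMap_C]
  rw [h1, h2, h3]
  have hsplit : (1 + x)^N = (1+x)^(N-i) * (1+x)^i := by rw [← pow_add]; congr 1; omega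
  rw [hsplit]
  have hw : (1+x)^i * w^i = (1-x)^i := by
    rw [w, div_pow, mul_comm, div_mul_cancel₀ _ (pow_ne_zero _ one_add_x_ne)]
  calc algebraMap ℂ (RatFunc ℂ) (p.coeff i) * (1-x)^i * (1+x)^(N-i)
      = (1+x)^(N-i) * ((1+x)^i * w^i) * algebraMap ℂ (RatFunc ℂ) (p.coeff i) := by rw [hw]; ring
    _ = (1+x)^(N-i) * (1+x)^i * (algebraMap ℂ (RatFunc ℂ) (p.coeff i) * w^i) := by ring

lemma hC (a : ℂ) : ι (Polynomial.C a) = algebraMap ℂ (RatFunc ℂ) a := by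
  simp [RatFunc.algebraMap_C]

lemma aeval_w_Phi (N : ℕ) (p : Polynomial ℂ) (hp : p.natDegree < N + 1) :
    (1 + x)^N * Polynomial.aeval w (Phi N p) = 2^N * ι p := by
  conv_rhs => rw [Polynomial.as_sum_range' p (N+1) hp]
  rw [Phi, map_sum, map_sum, mul_sum, mul_sum]
  apply sum_congr rfl
  intro i hi
  have hiN : i ≤ N := Nat.lt_succ_iff.mp (mem_range.mp hi)
  rw [map_mul, map_mul, map_pow, map_pow, Polynomial.aeval_C]
  have h1 : Polynomial.aeval w ((1:Polynomial ℂ) - Polynomial.X) = 1 - w := by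
    rw [map_sub, map_one, Polynomial.aeval_X]
  have h2 : Polynomial.aeval w ((1:Polynomial ℂ) + Polynomial.X) = 1 + w := by
    rw [map_add, map_one, Polynomial.aeval_X]
  have h3 : ι (Polynomial.monomial i (p.coeff i))
      = algebraMap ℂ (RatFunc ℂ) (p.coeff i) * x ^ i := by
    rw [← Polynomial.C_mul_X_pow_eq_monomial, map_mul, map_pow, hC]
  rw [h1, h2, one_sub_w, one_add_w, h3]
  have hpow : ((1+x)^i * (1+x)^(N-i) : RatFunc ℂ) = (1+x)^N := by
    rw [← pow_add]; congr 1; omega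
  have h2pow : ((2:RatFunc ℂ)^i * 2^(N-i)) = 2^N := by
    rw [← pow_add]; congr 1; omega
  have hne : ((1+x)^N : RatFunc ℂ) ≠ 0 := pow_ne_zero _ one_add_x_ne
  have hkey : ((2*x)^i / (1+x)^i) * ((2:RatFunc ℂ)^(N-i) / (1+x)^(N-i)) = 2^N * x^i / (1+x)^N := by
    rw [div_mul_div_comm, hpow]
    congr 1
    rw [mul_pow, mul_right_comm, h2pow]
  rw [div_pow, div_pow, mul_assoc, hkey, mul_comm ((1+x)^N), mul_assoc,
    div_mul_cancel₀ _ hne]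
  ring

lemma Phi_Phi (N : ℕ) (p : Polynomial ℂ) (hp : p.natDegree < N + 1) :
    Phi N (Phi N p) = Polynomial.C ((2:ℂ)^N) * p := by
  apply RatFunc.algebraMap_injective ℂ
  rw [key N _ ((natDegree_Phi_le N p).trans_lt (Nat.lt_succ_self N)), aeval_w_Phi N p hp,
    map_mul, hC, map_pow, map_ofNat]

lemma Phi_mul (a b : ℕ) (p q : Polynomial ℂ) (hp : p.natDegree < a + 1)
    (hq : q.natDegree < b + 1) :
    Phi (a+b) (p * q) = Phi a p * Phi b q := by
  apply RatFunc.algebraMap_injective ℂ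
  have hpq : (p*q).natDegree < a + b + 1 :=
    (Polynomial.natDegree_mul_le).trans_lt (by omega)
  rw [key _ _ hpq, map_mul, map_mul, key _ _ hp, key _ _ hq, pow_add]
  ring

lemma Phi_sum {κ : Type*} (N : ℕ) (s : Finset κ) (F : κ → Polynomial ℂ) :
    Phi N (∑ i ∈ s, F i) = ∑ i ∈ s, Phi N (F i) := by
  simp only [Phi, Polynomial.finset_sum_coeff, map_sum, Finset.sum_mul]
  exact Finset.sum_comm

lemma Phi_C_mul (N : ℕ) (a : ℂ) (p : Polynomial ℂ) :
    Phi N (Polynomial.C a * p) = Polynomial.C a * Phi N p := by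
  simp only [Phi, Polynomial.coeff_C_mul, map_mul, mul_sum]
  exact sum_congr rfl fun i _ => by ring

lemma Phi_X_pow (N k : ℕ) (h : k ≤ N) :
    Phi N (Polynomial.X ^ k) =
      (1 - Polynomial.X)^k * (1 + Polynomial.X)^(N-k) := by
  rw [Phi]
  rw [Finset.sum_eq_single_of_mem k (mem_range.mpr (by omega))]
  · simp [Polynomial.coeff_X_pow]
  · intro i _ hik
    rw [Polynomial.coeff_X_pow, if_neg hik]
    simp

/-- Krawtchouk-type coefficient. -/
noncomputable def Kr (n k t : ℕ) : ℂ :=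
  ((1 - Polynomial.X)^t * (1 + Polynomial.X)^(n-t) : Polynomial ℂ).coeff k

lemma exists_c (m n : ℕ) (hn : 2*m+1 ≤ n) (y : Fin (m+1) → ℂ) :
    ∃ c : Fin (m+1) → ℂ, ∀ t : Fin (m+1),
      ∑ k : Fin (m+1), c k * Kr n (k:ℕ) (2*(t:ℕ)+1) = y t := by
  classical
  set d := 2*m+1 with hd
  set A : Matrix (Fin (m+1)) (Fin (m+1)) ℂ :=
    fun j t => Kr n (j:ℕ) (2*(t:ℕ)+1) with hA
  have hdet : A.det ≠ 0 := by
    intro h0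
    obtain ⟨v, hv, hAv⟩ := (Matrix.exists_mulVec_eq_zero_iff).mpr h0
    -- the odd polynomial
    set f : Polynomial ℂ := ∑ t : Fin (m+1), Polynomial.C (v t) * Polynomial.X^(2*(t:ℕ)+1)
      with hf
    have hfdeg : f.natDegree < d + 1 := by
      apply Nat.lt_succ_of_le
      apply Polynomial.natDegree_sum_le_of_forall_le
      intro t _
      refine (Polynomial.natDegree_C_mul_le _ _).trans ?_
      refine (Polynomial.natDegree_X_pow_le _).trans ?_
      have := t.2; omega
    have hfcoeff : ∀ s : Fin (m+1), f.coeff (2*(s:ℕ)+1) = v s := by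
      intro s
      rw [hf, Polynomial.finset_sum_coeff,
        Finset.sum_eq_single_of_mem s (mem_univ s)]
      · simp [Polynomial.coeff_C_mul, Polynomial.coeff_X_pow]
      · intro t _ hts
        have : (2*(t:ℕ)+1) ≠ (2*(s:ℕ)+1) := by
          intro h; apply hts; apply Fin.ext; omega
        simp [Polynomial.coeff_C_mul, Polynomial.coeff_X_pow, Ne.symm this, Fin.val_inj, Ne.symm hts]
    have hfne : f ≠ 0 := by
      obtain ⟨s, hs⟩ := Function.ne_iff.mp hv
      simp only [Pi.zero_apply] at hs
      intro h0
      exact hs (by rw [← hfcoeff s, h0, Polynomial.coeff_zero])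
    -- Phi d f
    have hPhif : Phi d f = ∑ t : Fin (m+1),
        Polynomial.C (v t) * ((1 - Polynomial.X)^(2*(t:ℕ)+1)
          * (1 + Polynomial.X)^(d-(2*(t:ℕ)+1))) := by
      rw [hf, Phi_sum]
      apply sum_congr rfl
      intro t _
      rw [Phi_C_mul, Phi_X_pow _ _ (by have := t.2; omega)]
    -- Q = (1+X)^(n-d) * Phi d f
    have hQ : (1 + Polynomial.X)^(n-d) * Phi d f = ∑ t : Fin (m+1),
        Polynomial.C (v t) * ((1 - Polynomial.X)^(2*(t:ℕ)+1)
          * (1 + Polynomial.X)^(n-(2*(t:ℕ)+1))) := by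
      rw [hPhif, mul_sum]
      apply sum_congr rfl
      intro t _
      have ht := t.2
      have he : (n - d) + (d - (2*(t:ℕ)+1)) = n - (2*(t:ℕ)+1) := by omega
      rw [← he, pow_add]
      ring
    have hQcoeff : ∀ j, j < m + 1 →
        ((1 + Polynomial.X)^(n-d) * Phi d f).coeff j = 0 := by
      intro j hj
      rw [hQ, Polynomial.finset_sum_coeff]
      have := hAv
      have hj' : ∀ t : Fin (m+1),
          (Polynomial.C (v t) * ((1 - Polynomial.X)^(2*(t:ℕ)+1)
            * (1 + Polynomial.X)^(n-(2*(t:ℕ)+1)))).coeff j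
          = A ⟨j, hj⟩ t * v t := by
        intro t
        rw [Polynomial.coeff_C_mul, hA]
        simp only [Kr]
        ring
      rw [Finset.sum_congr rfl fun t _ => hj' t]
      have := congrFun hAv ⟨j, hj⟩
      simpa [Matrix.mulVec, dotProduct] using this
    have hdvdQ : Polynomial.X^(m+1) ∣ (1 + Polynomial.X)^(n-d) * Phi d f :=
      Polynomial.X_pow_dvd_iff.mpr hQcoeff
    have hXnd : ¬ (Polynomial.X : Polynomial ℂ) ∣ (1 + Polynomial.X)^(n-d) := by
      rw [Polynomial.X_dvd_iff]
      intro h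
      rw [Polynomial.coeff_zero_eq_eval_zero] at h
      simp at h
    have hdvd : Polynomial.X^(m+1) ∣ Phi d f :=
      (Polynomial.prime_X).pow_dvd_of_dvd_mul_left _ hXnd hdvdQ
    obtain ⟨S, hS⟩ := hdvd
    have hSdeg : S.natDegree < m + 1 := by
      rcases eq_or_ne S 0 with h | h
      · simp [h]
      have h1 : (Polynomial.X^(m+1) * S).natDegree = (m+1) + S.natDegree := by
        rw [Polynomial.natDegree_mul (pow_ne_zero _ Polynomial.X_ne_zero) h, Polynomial.natDegree_X_pow]
      have h2 : (Phi d f).natDegree ≤ d := natDegree_Phi_le d f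
      rw [← hS] at h1
      omega
    -- apply Phi d again
    have hinv : Polynomial.C ((2:ℂ)^d) * f
        = (1 - Polynomial.X)^(m+1) * Phi m S := by
      rw [← Phi_Phi d f hfdeg, hS]
      have : d = (m+1) + m := by omega
      rw [this, Phi_mul (m+1) m _ _ (by simp [Polynomial.natDegree_X_pow]) hSdeg,
        Phi_X_pow (m+1) (m+1) le_rfl]
      simp
    have hdvdf1 : ((Polynomial.X - 1)^(m+1) : Polynomial ℂ) ∣ f := by
      have hu : ((1 - Polynomial.X)^(m+1) : Polynomial ℂ)
          = (-1)^(m+1) * (Polynomial.X - 1)^(m+1) := by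
        rw [← mul_pow]; congr 1; ring
      have h2d : ((2:ℂ)^d) ≠ 0 := by norm_num
      have hf2 : f = Polynomial.C (((2:ℂ)^d)⁻¹)
          * ((1 - Polynomial.X)^(m+1) * Phi m S) := by
        rw [← hinv, ← mul_assoc, ← Polynomial.C_mul, inv_mul_cancel₀ h2d,
          Polynomial.C_1, one_mul]
      exact ⟨Polynomial.C (((2:ℂ)^d)⁻¹) * ((-1)^(m+1) * Phi m S),
        by rw [hf2, hu]; ring⟩
    -- f is odd: f.comp (-X) = -f
    have hodd : f.comp (-Polynomial.X) = -f := by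
      rw [hf, Polynomial.sum_comp, ← Finset.sum_neg_distrib]
      apply sum_congr rfl
      intro t _
      rw [Polynomial.mul_comp, Polynomial.C_comp, Polynomial.X_pow_comp,
        Odd.neg_pow ⟨(t:ℕ), by ring⟩]
      ring
    have hdvdf2 : ((Polynomial.X + 1)^(m+1) : Polynomial ℂ) ∣ f := by
      obtain ⟨g, hg⟩ := hdvdf1
      have : -f = ((-Polynomial.X - 1)^(m+1)) * g.comp (-Polynomial.X) := by
        rw [← hodd, hg, Polynomial.mul_comp, Polynomial.pow_comp,
          Polynomial.sub_comp, Polynomial.X_comp, Polynomial.one_comp]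
      have h2 : ((-Polynomial.X - 1 : Polynomial ℂ))^(m+1)
          = (-1)^(m+1) * (Polynomial.X + 1)^(m+1) := by
        rw [← mul_pow]; congr 1; ring
      have h3 : ((Polynomial.X + 1)^(m+1) : Polynomial ℂ) ∣ -f :=
        ⟨(-1)^(m+1) * g.comp (-Polynomial.X), by rw [this, h2]; ring⟩
      exact (dvd_neg).mp h3
    -- coprimality and degree contradiction
    have hcop : IsCoprime ((Polynomial.X - 1 : Polynomial ℂ)) (Polynomial.X + 1) := by
      refine ⟨Polynomial.C (-2⁻¹ : ℂ), Polynomial.C (2⁻¹ : ℂ), ?_⟩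
      have : (Polynomial.C (-2⁻¹ : ℂ)) * (Polynomial.X - 1)
          + (Polynomial.C (2⁻¹ : ℂ)) * (Polynomial.X + 1)
          = (Polynomial.C (-2⁻¹ : ℂ) + Polynomial.C (2⁻¹ : ℂ)) * Polynomial.X
            + (Polynomial.C (2⁻¹ : ℂ) - Polynomial.C (-2⁻¹ : ℂ)) := by ring
      rw [this, ← Polynomial.C_add, ← Polynomial.C_sub]
      norm_num
    have hdvd2 : ((Polynomial.X - 1)^(m+1) * (Polynomial.X + 1)^(m+1) : Polynomial ℂ) ∣ f :=
      (IsCoprime.pow hcop).mul_dvd hdvdf1 hdvdf2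
    have e1 : ((Polynomial.X : Polynomial ℂ) - 1) = Polynomial.X - Polynomial.C 1 := by
      rw [Polynomial.C_1]
    have e2 : ((Polynomial.X : Polynomial ℂ) + 1) = Polynomial.X - Polynomial.C (-1) := by
      rw [map_neg, Polynomial.C_1]; ring
    have hdeg : ((Polynomial.X - 1)^(m+1) * (Polynomial.X + 1)^(m+1) : Polynomial ℂ).natDegree
        = 2*m+2 := by
      rw [e1, e2, Polynomial.natDegree_mul (pow_ne_zero _ (Polynomial.X_sub_C_ne_zero 1))
        (pow_ne_zero _ (Polynomial.X_sub_C_ne_zero (-1))),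
        Polynomial.natDegree_pow, Polynomial.natDegree_pow, Polynomial.natDegree_X_sub_C,
        Polynomial.natDegree_X_sub_C]
      ring
    have := Polynomial.natDegree_le_of_dvd hdvd2 hfne
    omega
  -- invert the matrix
  have hunit : IsUnit A := (Matrix.isUnit_iff_isUnit_det A).mpr (Ne.isUnit hdet)
  refine ⟨Matrix.vecMul y A⁻¹, ?_⟩
  intro t
  have : Matrix.vecMul (Matrix.vecMul y A⁻¹) A = y := by
    rw [Matrix.vecMul_vecMul, Matrix.nonsing_inv_mul A (Ne.isUnit hdet), Matrix.vecMul_one]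
  have := congrFun this t
  rw [← this]
  simp [Matrix.vecMul, dotProduct, hA]

section Mv

variable {n : ℕ}

lemma ind_apply (T : Finset (Fin n)) (j : Fin n) :
    (∑ i ∈ T, Finsupp.single i (1:ℕ)) j = if j ∈ T then 1 else 0 := by
  rw [Finset.sum_apply']
  simp_rw [Finsupp.single_apply]
  exact Finset.sum_ite_eq' T j (fun _ => 1)

lemma coeff_esymm' (d : ℕ) (α : Fin n →₀ ℕ) :
    MvPolynomial.coeff α (esymm (Fin n) ℂ d) =
      if (∀ j, α j ≤ 1) ∧ (∑ j, α j) = d then 1 else 0 := by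
  classical
  rw [esymm_eq_sum_monomial, MvPolynomial.coeff_sum]
  simp_rw [MvPolynomial.coeff_monomial]
  by_cases h : (∀ j, α j ≤ 1) ∧ (∑ j, α j) = d
  · rw [if_pos h]
    obtain ⟨h1, h2⟩ := h
    have hsupp : ∀ j ∈ α.support, α j = 1 := by
      intro j hj
      have := Finsupp.mem_support_iff.mp hj
      have := h1 j
      omega
    have hcard : α.support.card = d := by
      have : ∑ j, α j = ∑ j ∈ α.support, α j :=
        (Finset.sum_subset (Finset.subset_univ _)
          (fun j _ hj => Finsupp.notMem_support_iff.mp hj)).symm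
      rw [this, Finset.sum_congr rfl hsupp, Finset.sum_const, smul_eq_mul, mul_one] at h2
      exact h2
    have hind : (∑ i ∈ α.support, Finsupp.single i (1:ℕ)) = α := by
      ext j
      rw [ind_apply]
      by_cases hj : j ∈ α.support
      · rw [if_pos hj, hsupp j hj]
      · rw [if_neg hj, eq_comm]
        exact Finsupp.notMem_support_iff.mp hj
    rw [Finset.sum_eq_single_of_mem α.support]
    · rw [if_pos hind]
    · exact mem_powersetCard_univ.mpr hcard
    · intro T _ hT
      have h' : ¬(∑ i ∈ T, Finsupp.single i (1:ℕ)) = α := by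
        intro hc
        apply hT
        rw [← hc]
        ext j
        simp [Finsupp.mem_support_iff, ind_apply]
      rw [if_neg h']
  · rw [if_neg h]
    apply Finset.sum_eq_zero
    intro T hT
    have h' : ¬(∑ i ∈ T, Finsupp.single i (1:ℕ)) = α := by
      intro hc
      apply h
      constructor
      · intro j
        rw [← hc, ind_apply]
        split <;> omega
      · have : ∑ j, α j = T.card := by
          rw [← hc]
          simp_rw [ind_apply]
          rw [Finset.sum_ite_mem, Finset.univ_inter, Finset.sum_const, smul_eq_mul, mul_one]
        rw [this]
        exact mem_powersetCard_univ.mp hT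
    rw [if_neg h']

lemma coeff_linpow (d : ℕ) (a : Fin n → ℂ) (α : Fin n →₀ ℕ) :
    MvPolynomial.coeff α ((∑ j, C (a j) * X j)^d)
      = if (∑ j, α j) = d
          then (Nat.multinomial Finset.univ α : ℂ) * ∏ j, a j ^ α j
          else 0 := by
  classical
  rw [Finset.sum_pow_eq_sum_piAntidiag, MvPolynomial.coeff_sum]
  have hterm : ∀ k : Fin n → ℕ,
      (Nat.multinomial Finset.univ k : MvPolynomial (Fin n) ℂ) * ∏ j, (C (a j) * X j) ^ k j
      = monomial (Finsupp.equivFunOnFinite.symm k)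
          ((Nat.multinomial Finset.univ k : ℂ) * ∏ j, a j ^ k j) := by
    intro k
    have h1 : ∏ j, (C (a j) * X j) ^ k j
        = C (∏ j, a j ^ k j) * ∏ j, (X j : MvPolynomial (Fin n) ℂ) ^ k j := by
      rw [map_prod]
      rw [← Finset.prod_mul_distrib]
      apply Finset.prod_congr rfl
      intro j _
      rw [mul_pow, map_pow]
    have hβ : ∀ j, (Finsupp.equivFunOnFinite.symm k) j = k j := fun j => rfl
    have h2 : (∏ j, (X j : MvPolynomial (Fin n) ℂ) ^ k j)
        = monomial (Finsupp.equivFunOnFinite.symm k) 1 := by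
      calc ∏ j, (X j : MvPolynomial (Fin n) ℂ) ^ k j
          = ∏ j, (X j : MvPolynomial (Fin n) ℂ) ^ (Finsupp.equivFunOnFinite.symm k) j := rfl
        _ = ∏ j ∈ (Finsupp.equivFunOnFinite.symm k).support,
              (X j : MvPolynomial (Fin n) ℂ) ^ (Finsupp.equivFunOnFinite.symm k) j :=
            (Finset.prod_subset (Finset.subset_univ _)
              (fun j _ hj => by rw [Finsupp.notMem_support_iff.mp hj, pow_zero])).symm
        _ = monomial (Finsupp.equivFunOnFinite.symm k) 1 := prod_X_pow_eq_monomial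
    rw [h1, h2]
    have hcast : ((Nat.multinomial Finset.univ k : MvPolynomial (Fin n) ℂ))
        = C ((Nat.multinomial Finset.univ k : ℂ)) := by
      rw [MvPolynomial.C_eq_coe_nat]
    rw [hcast]
    rw [← mul_assoc, ← map_mul, C_mul_monomial, mul_one]
  simp_rw [hterm, MvPolynomial.coeff_monomial]
  by_cases h : (∑ j, α j) = d
  · rw [if_pos h]
    rw [Finset.sum_eq_single_of_mem (⇑α : Fin n → ℕ)]
    · rw [if_pos (by simp)]
    · rw [mem_piAntidiag]
      exact ⟨h, fun i _ => Finset.mem_univ i⟩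
    · intro k _ hk
      have h' : ¬ Finsupp.equivFunOnFinite.symm k = α := by
        intro hc
        apply hk
        have h2 : (⇑(Finsupp.equivFunOnFinite.symm k) : Fin n → ℕ) = ⇑α :=
          congrArg _ hc
        exact h2
      rw [if_neg h']
  · rw [if_neg h]
    apply Finset.sum_eq_zero
    intro k hk
    have h' : ¬ Finsupp.equivFunOnFinite.symm k = α := by
      intro hc
      apply h
      obtain ⟨hk1, _⟩ := mem_piAntidiag.mp hk
      have := congrArg (fun (β : Fin n →₀ ℕ) => ∑ j, β j) hc
      simp only [Finsupp.coe_equivFunOnFinite_symm] at this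
      rw [← this]
      exact hk1
    rw [if_neg h']

lemma sum_powersetCard_eps (α : Fin n → ℕ) (k : ℕ) :
    ∑ S ∈ powersetCard k (univ : Finset (Fin n)), ∏ j ∈ S, ((-1:ℂ))^(α j)
      = Kr n k ((univ.filter (fun j => Odd (α j))).card) := by
  classical
  set t := (univ.filter (fun j => Odd (α j))).card with ht
  have hprod : ∏ j : Fin n, (Polynomial.C ((-1:ℂ)^(α j)) * Polynomial.X + 1)
      = (1 - Polynomial.X)^t * (1 + Polynomial.X)^(n-t) := by
    rw [← Finset.prod_filter_mul_prod_filter_not univ (fun j => Odd (α j))]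
    have hcardnot : (univ.filter (fun j => ¬ Odd (α j))).card = n - t := by
      have := Finset.card_filter_add_card_filter_not
        (s := (univ : Finset (Fin n))) (p := fun j => Odd (α j))
      simp only [Finset.card_univ, Fintype.card_fin] at this
      omega
    congr 1
    · rw [Finset.prod_congr rfl (fun j hj => ?_), Finset.prod_const, ht]
      have hodd : Odd (α j) := (Finset.mem_filter.mp hj).2
      rw [hodd.neg_one_pow, map_neg, map_one]
      ring
    · rw [Finset.prod_congr rfl (fun j hj => ?_), Finset.prod_const, hcardnot]
      have heven : Even (α j) := Nat.not_odd_iff_even.mp (Finset.mem_filter.mp hj).2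
      rw [heven.neg_one_pow, map_one]
      ring
  have hcoeff : (∏ j : Fin n, (Polynomial.C ((-1:ℂ)^(α j)) * Polynomial.X + 1)).coeff k
      = ∑ S ∈ powersetCard k univ, ∏ j ∈ S, ((-1:ℂ))^(α j) := by
    rw [Finset.prod_add, Polynomial.finset_sum_coeff]
    have hterm : ∀ S : Finset (Fin n),
        ((∏ j ∈ S, Polynomial.C ((-1:ℂ)^(α j)) * Polynomial.X)
          * ∏ _j ∈ univ \ S, (1:Polynomial ℂ)).coeff k
        = if S.card = k then ∏ j ∈ S, ((-1:ℂ))^(α j) else 0 := by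
      intro S
      rw [Finset.prod_const_one, mul_one, Finset.prod_mul_distrib, Finset.prod_const,
        ← map_prod, Polynomial.coeff_C_mul, Polynomial.coeff_X_pow]
      by_cases h : S.card = k
      · rw [if_pos h, if_pos h.symm, mul_one]
      · rw [if_neg h, if_neg (fun hh => h hh.symm), mul_zero]
    rw [Finset.sum_congr rfl (fun S _ => hterm S)]
    rw [Finset.powersetCard_eq_filter, Finset.sum_filter]
  rw [← hcoeff, hprod, Kr]

lemma parity_t (d : ℕ) (hd : d % 2 = 1) (α : Fin n →₀ ℕ) (hsum : ∑ j, α j = d) :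
    ((univ.filter (fun j => Odd (α j))).card) % 2 = 1 := by
  have h1 : (univ.filter (fun j => Odd (α j))).card = ∑ j, if Odd (α j) then 1 else 0 :=
    Finset.card_filter _ _
  have h2 : ∀ j : Fin n, (if Odd (α j) then 1 else 0) = α j % 2 := by
    intro j
    rcases Nat.even_or_odd (α j) with h | h
    · have h0 := Nat.even_iff.mp h
      have hno : ¬ Odd (α j) := by rw [Nat.odd_iff, h0]; simp
      rw [if_neg hno, h0]
    · rw [if_pos h, Nat.odd_iff.mp h]
  rw [h1, Finset.sum_congr rfl (fun j _ => h2 j), ← Finset.sum_nat_mod, hsum, hd]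

lemma t_le (d : ℕ) (α : Fin n →₀ ℕ) (hsum : ∑ j, α j = d) :
    (univ.filter (fun j => Odd (α j))).card ≤ d := by
  have h0 : ∀ j ∈ univ.filter (fun j => Odd (α j)), 1 ≤ α j := by
    intro j hj
    have hodd : Odd (α j) := (Finset.mem_filter.mp hj).2
    rcases Nat.eq_zero_or_pos (α j) with h | h
    · rw [h] at hodd; simp [Nat.odd_iff] at hodd
    · exact h
  calc (univ.filter (fun j => Odd (α j))).card
      = ∑ _j ∈ univ.filter (fun j => Odd (α j)), 1 := (Finset.card_eq_sum_ones _)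
    _ ≤ ∑ j ∈ univ.filter (fun j => Odd (α j)), α j := Finset.sum_le_sum h0
    _ ≤ ∑ j, α j := Finset.sum_le_sum_of_subset (Finset.filter_subset _ _)
    _ = d := hsum

lemma t_eq_d_imp (d : ℕ) (α : Fin n →₀ ℕ) (hsum : ∑ j, α j = d)
    (htd : (univ.filter (fun j => Odd (α j))).card = d) : ∀ j, α j ≤ 1 := by
  classical
  set s := univ.filter (fun j => Odd (α j)) with hs
  have h0 : ∀ j ∈ s, 1 ≤ α j := by
    intro j hj
    have hodd : Odd (α j) := (Finset.mem_filter.mp hj).2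
    rcases Nat.eq_zero_or_pos (α j) with h | h
    · rw [h] at hodd; simp [Nat.odd_iff] at hodd
    · exact h
  have hsum_split : ∑ j ∈ s, α j + ∑ j ∈ univ.filter (fun j => ¬ Odd (α j)), α j = d := by
    rw [← hsum, hs]
    exact Finset.sum_filter_add_sum_filter_not _ _ _
  have hcard_le : s.card ≤ ∑ j ∈ s, α j := by
    rw [Finset.card_eq_sum_ones]
    exact Finset.sum_le_sum h0
  have hsum_le : ∑ j ∈ s, α j ≤ d := by omega
  have hsum_s : ∑ j ∈ s, α j = d := le_antisymm hsum_le (htd ▸ hcard_le)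
  have hrest : ∑ j ∈ univ.filter (fun j => ¬ Odd (α j)), α j = 0 := by omega
  have hone : ∀ j ∈ s, α j = 1 := by
    by_contra hcon
    push_neg at hcon
    obtain ⟨j0, hj0, hj0ne⟩ := hcon
    have h2 : 1 < α j0 := lt_of_le_of_ne (h0 j0 hj0) (Ne.symm hj0ne)
    have : ∑ _j ∈ s, 1 < ∑ j ∈ s, α j :=
      Finset.sum_lt_sum (fun i hi => h0 i hi) ⟨j0, hj0, h2⟩
    rw [Finset.sum_const, smul_eq_mul, mul_one] at this
    omega
  intro j
  by_cases hj : Odd (α j)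
  · exact le_of_eq (hone j (Finset.mem_filter.mpr ⟨Finset.mem_univ j, hj⟩))
  · have : α j = 0 := by
      have := (Finset.sum_eq_zero_iff).mp hrest j
        (Finset.mem_filter.mpr ⟨Finset.mem_univ j, hj⟩)
      exact this
    omega

lemma sq_imp_t_eq_d (d : ℕ) (α : Fin n →₀ ℕ) (hsum : ∑ j, α j = d)
    (h : ∀ j, α j ≤ 1) : (univ.filter (fun j => Odd (α j))).card = d := by
  have h1 : (univ.filter (fun j => Odd (α j))).card = ∑ j, if Odd (α j) then 1 else 0 :=
    Finset.card_filter _ _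
  rw [h1, ← hsum]
  apply Finset.sum_congr rfl
  intro j _
  have := h j
  rcases Nat.le_one_iff_eq_zero_or_eq_one.mp this with h0 | h0 <;> simp [h0, Nat.odd_iff]

lemma multinomial_sq (α : Fin n →₀ ℕ) (h : ∀ j, α j ≤ 1) :
    Nat.multinomial univ ⇑α = Nat.factorial (∑ j, α j) := by
  rw [Nat.multinomial]
  have h1 : ∏ j, Nat.factorial (α j) = 1 := by
    apply Finset.prod_eq_one
    intro j _
    have := h j
    rcases Nat.le_one_iff_eq_zero_or_eq_one.mp this with h0 | h0 <;> simp [h0]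
  rw [h1, Nat.div_one]

end Mv

end WaringAux


/-- The symmetric tensor (Waring) rank of a form `F ∈ ℂ[x_1,…,x_n]` of degree `d`:
the least `s` such that `F = ∑_{i=1}^s L_i^d` with `L_i` linear forms. -/
noncomputable def waringRank {n : ℕ} (d : ℕ) (F : MvPolynomial (Fin n) ℂ) : ℕ :=
  sInf {s | ∃ L : Fin s → Fin n → ℂ, F = ∑ i, (∑ j, C (L i j) * X j) ^ d}

/-- For odd `d` and `n ≥ d`, the Waring rank of `σ_{d,n}` is at most
`∑_{i=0}^{(d-1)/2} C(n,i)`. -/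
theorem waringRank_esymm_odd_le (d n : ℕ) (hd : Odd d) (hn : d ≤ n) :
    waringRank d (esymm (Fin n) ℂ d) ≤ ∑ i ∈ range ((d - 1) / 2 + 1), n.choose i := by
  classical
  obtain ⟨m, hm⟩ := hd
  have hdm : d = 2*m+1 := by omega
  have hm2 : (d - 1) / 2 = m := by omega
  set y : Fin (m+1) → ℂ := fun t => if (t:ℕ) = m then ((Nat.factorial d : ℂ))⁻¹ else 0 with hy
  obtain ⟨c, hc⟩ := WaringAux.exists_c m n (by omega) y
  set c' : ℕ → ℂ := fun k => if h : k < m+1 then c ⟨k,h⟩ else 0 with hc'def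
  have hroot : ∀ k : ℕ, ∃ z : ℂ, z^d = c' k :=
    fun k => IsAlgClosed.exists_pow_nat_eq (c' k) (by omega)
  choose r hr using hroot
  set eps : Finset (Fin n) → Fin n → ℂ := fun S j => if j ∈ S then -1 else 1 with heps
  set Q : Finset (Finset (Fin n)) := (range (m+1)).biUnion (fun k => powersetCard k univ)
    with hQdef
  have hdisj : ∀ i ∈ range (m+1), ∀ j ∈ range (m+1), i ≠ j →
      Disjoint (powersetCard i (univ : Finset (Fin n))) (powersetCard j univ) := by
    intro i _ j _ hij
    rw [Finset.disjoint_left]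
    intro S hSi hSj
    exact hij ((mem_powersetCard_univ.mp hSi).symm.trans (mem_powersetCard_univ.mp hSj))
  have hdisj' : Set.PairwiseDisjoint ↑(range (m+1))
      (fun k => powersetCard k (univ : Finset (Fin n))) := by
    intro i hi j hj hij
    exact hdisj i (by simpa using hi) j (by simpa using hj) hij
  have hmain : esymm (Fin n) ℂ d
      = ∑ S ∈ Q, C (c' S.card) * (∑ j, C (eps S j) * X j)^d := by
    apply MvPolynomial.ext
    intro α
    rw [MvPolynomial.coeff_sum]
    simp_rw [MvPolynomial.coeff_C_mul, WaringAux.coeff_linpow, WaringAux.coeff_esymm']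
    by_cases hs : (∑ j, α j) = d
    case neg =>
      rw [if_neg (fun hh => hs hh.2)]
      symm
      apply Finset.sum_eq_zero
      intro S _
      rw [if_neg hs, mul_zero]
    case pos =>
      simp_rw [if_pos hs]
      set t := (univ.filter (fun j => Odd (α j))).card with htdef
      set M : ℂ := (Nat.multinomial univ ⇑α : ℂ) with hM
      have hprodeps : ∀ S : Finset (Fin n),
          ∏ j, (eps S j)^(α j) = ∏ j ∈ S, ((-1:ℂ))^(α j) := by
        intro S
        rw [← Finset.prod_subset (Finset.subset_univ S)
          (fun j _ hj => by simp [heps, hj])]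
        apply Finset.prod_congr rfl
        intro j hj
        simp [heps, hj]
      rw [hQdef, Finset.sum_biUnion hdisj']
      have hinner : ∀ k ∈ range (m+1),
          ∑ S ∈ powersetCard k (univ : Finset (Fin n)),
            c' S.card * (M * ∏ j, (eps S j)^(α j))
          = M * (c' k * WaringAux.Kr n k t) := by
        intro k _
        calc ∑ S ∈ powersetCard k (univ : Finset (Fin n)),
              c' S.card * (M * ∏ j, (eps S j)^(α j))
            = ∑ S ∈ powersetCard k (univ : Finset (Fin n)),
              (M * c' k) * ∏ j ∈ S, ((-1:ℂ))^(α j) := by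
              apply Finset.sum_congr rfl
              intro S hS
              rw [hprodeps S, mem_powersetCard_univ.mp hS]
              ring
          _ = (M * c' k) * ∑ S ∈ powersetCard k (univ : Finset (Fin n)),
                ∏ j ∈ S, ((-1:ℂ))^(α j) := by rw [← Finset.mul_sum]
          _ = M * (c' k * WaringAux.Kr n k t) := by
              rw [WaringAux.sum_powersetCard_eps ⇑α k]
              ring
      rw [Finset.sum_congr rfl hinner, ← Finset.mul_sum]
      have hrange : ∑ k ∈ range (m+1), c' k * WaringAux.Kr n k t
          = ∑ k : Fin (m+1), c k * WaringAux.Kr n (k:ℕ) t := by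
        rw [← Fin.sum_univ_eq_sum_range]
        apply Finset.sum_congr rfl
        intro k _
        congr 1
        simp only [hc'def]; exact dif_pos k.isLt
      have htodd : t % 2 = 1 := WaringAux.parity_t d (by omega) α hs
      have htle : t ≤ d := WaringAux.t_le d α hs
      set τ : Fin (m+1) := ⟨(t-1)/2, by omega⟩ with hτ
      have hτv : (τ:ℕ) = (t-1)/2 := by rw [hτ]
      have ht2 : 2*((τ:ℕ))+1 = t := by rw [hτv]; omega
      have hsum_c : ∑ k : Fin (m+1), c k * WaringAux.Kr n (k:ℕ) t = y τ := by
        rw [← ht2]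
        exact hc τ
      rw [hrange, hsum_c]
      by_cases hsq : ∀ j, α j ≤ 1
      · rw [if_pos ⟨hsq, hs⟩]
        have htd : t = d := WaringAux.sq_imp_t_eq_d d α hs hsq
        have hcond : (τ:ℕ) = m := by rw [hτv]; omega
        have hyτ : y τ = ((Nat.factorial d : ℂ))⁻¹ := by
          simp only [hy]
          rw [if_pos hcond]
        have hMd : M = (Nat.factorial d : ℂ) := by
          rw [hM, WaringAux.multinomial_sq α hsq, hs]
        rw [hyτ, hMd, mul_inv_cancel₀]
        exact_mod_cast Nat.factorial_ne_zero d
      · rw [if_neg (fun hh => hsq hh.1)]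
        have htd : t ≠ d := fun h => hsq (WaringAux.t_eq_d_imp d α hs h)
        have hcond : ¬ (τ:ℕ) = m := by rw [hτv]; omega
        have hyτ : y τ = 0 := by
          simp only [hy]
          rw [if_neg hcond]
        rw [hyτ, mul_zero]
  have hterm : ∀ S : Finset (Fin n),
      C (c' S.card) * (∑ j, C (eps S j) * X j)^d
      = (∑ j, C (r S.card * eps S j) * X j)^d := by
    intro S
    have h1 : (∑ j, C (r S.card * eps S j) * X j)
        = C (r S.card) * ∑ j, C (eps S j) * X j := by
      rw [Finset.mul_sum]
      apply Finset.sum_congr rfl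
      intro j _
      rw [map_mul, mul_assoc]
    rw [h1, mul_pow, ← map_pow, hr]
  have hQmem : Q.card ∈ {s | ∃ L : Fin s → Fin n → ℂ,
      esymm (Fin n) ℂ d = ∑ i, (∑ j, C (L i j) * X j) ^ d} := by
    refine ⟨fun i j => r ((Q.equivFin.symm i : Finset (Fin n)).card)
      * eps (Q.equivFin.symm i) j, ?_⟩
    rw [hmain, Finset.sum_congr rfl (fun S _ => hterm S),
      ← Finset.sum_coe_sort Q (fun S => (∑ j, C (r S.card * eps S j) * X j)^d)]
    exact (Equiv.sum_comp Q.equivFin.symm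
      (fun S : Q => (∑ j, C (r (S : Finset (Fin n)).card * eps (S : Finset (Fin n)) j) * X j)^d)).symm
  have hle : waringRank d (esymm (Fin n) ℂ d) ≤ Q.card := by
    rw [waringRank]
    exact Nat.sInf_le hQmem
  have hcard : Q.card = ∑ i ∈ range (m+1), n.choose i := by
    rw [hQdef, Finset.card_biUnion hdisj]
    apply Finset.sum_congr rfl
    intro i _
    rw [Finset.card_powersetCard, Finset.card_univ, Fintype.card_fin]
  rw [hm2, ← hcard]
  exact hle
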